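/- For every d ≥ 1 there exists a set of cardinality ⌊(3d+1)/2⌋ in ℝ^d that is shattered by the collection of closed axis-parallel cubes; hence the VC dimension of the ℓ^∞ balls in ℝ^d equals ⌊(3d+1)/2⌋. -/

import Mathlib

/-- A collection `C` of subsets of `Ω` shatters a finite set `S` if every subset of `S`
is carved out by some member of `C`. -/
def Shatters {Ω : Type*} (C : Set (Set Ω)) (S : Finset Ω) : Prop :=
  ∀ A ⊆ S, ∃ c ∈ C, (S : Set Ω) ∩ c = (A : Set Ω)

/-- The collection of closed axis-parallel cubes in `ℝ^d`: products of `d` closed intervals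
all of the same (nonnegative) length.  These are exactly the closed balls of the ℓ^∞ norm. -/
def ClosedCubes (d : ℕ) : Set (Set (Fin d → ℝ)) :=
  {C | ∃ (a : Fin d → ℝ) (r : ℝ), 0 ≤ r ∧
    C = Set.univ.pi fun i => Set.Icc (a i) (a i + r)}

open Finset

section Core
variable {d : ℕ}

def IsMinAt (S : Finset (Fin d → ℝ)) (x : Fin d → ℝ) (i : Fin d) : Prop :=
  ∀ z ∈ S, z ≠ x → x i < z i

def IsMaxAt (S : Finset (Fin d → ℝ)) (x : Fin d → ℝ) (i : Fin d) : Prop :=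
  ∀ z ∈ S, z ≠ x → z i < x i

open Classical in
noncomputable def minSlots (S : Finset (Fin d → ℝ)) (x : Fin d → ℝ) : Finset (Fin d) :=
  Finset.univ.filter (fun i => IsMinAt S x i)

open Classical in
noncomputable def maxSlots (S : Finset (Fin d → ℝ)) (x : Fin d → ℝ) : Finset (Fin d) :=
  Finset.univ.filter (fun i => IsMaxAt S x i)

noncomputable def totSlots (S : Finset (Fin d → ℝ)) (x : Fin d → ℝ) : ℕ :=
  (minSlots S x).card + (maxSlots S x).card

lemma mem_minSlots {S : Finset (Fin d → ℝ)} {x : Fin d → ℝ} {i : Fin d} :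
    i ∈ minSlots S x ↔ IsMinAt S x i := by
  classical simp [minSlots]

lemma mem_maxSlots {S : Finset (Fin d → ℝ)} {x : Fin d → ℝ} {i : Fin d} :
    i ∈ maxSlots S x ↔ IsMaxAt S x i := by
  classical simp [maxSlots]

lemma cube_mem_iff (a : Fin d → ℝ) (r : ℝ) (x : Fin d → ℝ) :
    x ∈ Set.univ.pi (fun i => Set.Icc (a i) (a i + r)) ↔ ∀ i, a i ≤ x i ∧ x i ≤ a i + r := by
  simp only [Set.mem_pi, Set.mem_univ, Set.mem_Icc, forall_true_left]

/-- every point of a shattered set is strictly extremal in some coordinate -/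
lemma exists_slot {S : Finset (Fin d → ℝ)} (hS : Shatters (ClosedCubes d) S)
    {x : Fin d → ℝ} (hx : x ∈ S) : ∃ i, IsMinAt S x i ∨ IsMaxAt S x i := by
  obtain ⟨c, ⟨a, r, hr, rfl⟩, hc⟩ := hS (S.erase x) (Finset.erase_subset _ _)
  have hxc : x ∉ Set.univ.pi fun i => Set.Icc (a i) (a i + r) := by
    intro h
    have : x ∈ (↑(S.erase x) : Set (Fin d → ℝ)) := by rw [← hc]; exact ⟨hx, h⟩
    simp at this
  rw [cube_mem_iff] at hxc
  push_neg at hxc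
  obtain ⟨i, hi⟩ := hxc
  have hmem : ∀ z ∈ S, z ≠ x → a i ≤ z i ∧ z i ≤ a i + r := by
    intro z hz hzx
    have : z ∈ (↑(S.erase x) : Set (Fin d → ℝ)) := by simp [hz, hzx]
    rw [← hc] at this
    exact (cube_mem_iff a r z).1 this.2 i
  rcases lt_or_ge (x i) (a i) with h | h
  · exact ⟨i, Or.inl fun z hz hzx => lt_of_lt_of_le h (hmem z hz hzx).1⟩
  · refine ⟨i, Or.inr fun z hz hzx => lt_of_le_of_lt (hmem z hz hzx).2 (hi h)⟩

lemma minAt_unique {S : Finset (Fin d → ℝ)} {x y : Fin d → ℝ} {i : Fin d}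
    (hx : x ∈ S) (hy : y ∈ S) (h1 : IsMinAt S x i) (h2 : IsMinAt S y i) : x = y := by
  by_contra hne
  exact absurd (h1 y hy (Ne.symm hne)) (not_lt.2 (le_of_lt (h2 x hx hne)))

lemma maxAt_unique {S : Finset (Fin d → ℝ)} {x y : Fin d → ℝ} {i : Fin d}
    (hx : x ∈ S) (hy : y ∈ S) (h1 : IsMaxAt S x i) (h2 : IsMaxAt S y i) : x = y := by
  by_contra hne
  exact absurd (h1 y hy (Ne.symm hne)) (not_lt.2 (le_of_lt (h2 x hx hne)))

lemma sum_totSlots_le (S : Finset (Fin d → ℝ)) : ∑ x ∈ S, totSlots S x ≤ 2 * d := by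
  classical
  have hmin : ∑ x ∈ S, (minSlots S x).card ≤ d := by
    calc ∑ x ∈ S, (minSlots S x).card
        = ∑ x ∈ S, ∑ i : Fin d, (if IsMinAt S x i then 1 else 0) := by
          refine Finset.sum_congr rfl fun x _ => ?_
          rw [minSlots, Finset.card_filter]
      _ = ∑ i : Fin d, ∑ x ∈ S, (if IsMinAt S x i then 1 else 0) := Finset.sum_comm
      _ ≤ ∑ i : Fin d, 1 := by
          refine Finset.sum_le_sum fun i _ => ?_
          rw [← Finset.card_filter]
          refine Finset.card_le_one.2 fun x hx y hy => ?_
          simp only [Finset.mem_filter] at hx hy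
          exact minAt_unique hx.1 hy.1 hx.2 hy.2
      _ = d := by simp
  have hmax : ∑ x ∈ S, (maxSlots S x).card ≤ d := by
    calc ∑ x ∈ S, (maxSlots S x).card
        = ∑ x ∈ S, ∑ i : Fin d, (if IsMaxAt S x i then 1 else 0) := by
          refine Finset.sum_congr rfl fun x _ => ?_
          rw [maxSlots, Finset.card_filter]
      _ = ∑ i : Fin d, ∑ x ∈ S, (if IsMaxAt S x i then 1 else 0) := Finset.sum_comm
      _ ≤ ∑ i : Fin d, 1 := by
          refine Finset.sum_le_sum fun i _ => ?_
          rw [← Finset.card_filter]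
          refine Finset.card_le_one.2 fun x hx y hy => ?_
          simp only [Finset.mem_filter] at hx hy
          exact maxAt_unique hx.1 hy.1 hx.2 hy.2
      _ = d := by simp
  calc ∑ x ∈ S, totSlots S x = ∑ x ∈ S, (minSlots S x).card + ∑ x ∈ S, (maxSlots S x).card :=
        Finset.sum_add_distrib
    _ ≤ d + d := Nat.add_le_add hmin hmax
    _ = 2 * d := by ring

lemma slots_of_tot_one_min {S : Finset (Fin d → ℝ)} {x : Fin d → ℝ} {i : Fin d}
    (h1 : totSlots S x = 1) (hmin : IsMinAt S x i) :
    minSlots S x = {i} ∧ maxSlots S x = ∅ := by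
  have hi : i ∈ minSlots S x := mem_minSlots.2 hmin
  have h2 : 1 ≤ (minSlots S x).card := Finset.card_pos.2 ⟨i, hi⟩
  unfold totSlots at h1
  constructor
  · apply Finset.eq_singleton_iff_unique_mem.2
    refine ⟨hi, fun j hj => ?_⟩
    by_contra hne
    have : 2 ≤ (minSlots S x).card := Finset.one_lt_card.2 ⟨j, hj, i, hi, hne⟩
    omega
  · rw [← Finset.card_eq_zero]; omega

lemma slots_of_tot_one_max {S : Finset (Fin d → ℝ)} {x : Fin d → ℝ} {i : Fin d}
    (h1 : totSlots S x = 1) (hmax : IsMaxAt S x i) :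
    maxSlots S x = {i} ∧ minSlots S x = ∅ := by
  have hi : i ∈ maxSlots S x := mem_maxSlots.2 hmax
  have h2 : 1 ≤ (maxSlots S x).card := Finset.card_pos.2 ⟨i, hi⟩
  unfold totSlots at h1
  constructor
  · apply Finset.eq_singleton_iff_unique_mem.2
    refine ⟨hi, fun j hj => ?_⟩
    by_contra hne
    have : 2 ≤ (maxSlots S x).card := Finset.one_lt_card.2 ⟨j, hj, i, hi, hne⟩
    omega
  · rw [← Finset.card_eq_zero]; omega

end Core

section Core2
variable {d : ℕ}

/-- helper: a distinct third point exists -/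
lemma exists_third {S : Finset (Fin d → ℝ)} (hn : 3 ≤ S.card) (x y : Fin d → ℝ) :
    ∃ z ∈ S, z ≠ x ∧ z ≠ y := by
  classical
  have h1 : 1 ≤ ((S.erase x).erase y).card := by
    have := Finset.card_erase_le (a := y) (s := S.erase x)
    have h2 := Finset.card_erase_le (a := x) (s := S)
    have e1 : (S.erase x).card ≥ S.card - 1 := Finset.pred_card_le_card_erase
    have e2 : ((S.erase x).erase y).card ≥ (S.erase x).card - 1 := Finset.pred_card_le_card_erase
    omega
  obtain ⟨z, hz⟩ := Finset.card_pos.1 h1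
  simp only [Finset.mem_erase] at hz
  exact ⟨z, hz.2.2, hz.2.1, hz.1⟩

/-- In the cube excluding exactly `x` and `y` (the unique-slot strict min resp. max in
coordinate `i`), the violation of `x` must be `x i < a i`. -/
lemma excl_min {S : Finset (Fin d → ℝ)}
    (hinj : ∀ i : Fin d, Set.InjOn (fun x => x i) (S : Set (Fin d → ℝ)))
    (hn : 3 ≤ S.card)
    {x y : Fin d → ℝ} (hx : x ∈ S) (hy : y ∈ S) {i : Fin d}
    (hxtot : totSlots S x = 1) (hxmin : IsMinAt S x i)
    (hytot : totSlots S y = 1) (hymax : IsMaxAt S y i)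
    {a : Fin d → ℝ} {r : ℝ}
    (hA : ∀ z ∈ S, z ≠ x → z ≠ y → ∀ k, a k ≤ z k ∧ z k ≤ a k + r)
    {k : Fin d} (hviol : x k < a k ∨ a k + r < x k) : x i < a i := by
  obtain ⟨hxs, hxm⟩ := slots_of_tot_one_min hxtot hxmin
  obtain ⟨hys, hym⟩ := slots_of_tot_one_max hytot hymax
  have hxy : x ≠ y := by
    intro h
    rw [← h] at hymax
    have : i ∈ maxSlots S x := mem_maxSlots.2 hymax
    rw [hxm] at this; simp at this
  rcases hviol with hv | hv
  · -- x k < a k : x is strict min at k, so k = i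
    have hxz : ∀ z ∈ S, z ≠ x → z ≠ y → x k < z k :=
      fun z hz h1 h2 => lt_of_lt_of_le hv (hA z hz h1 h2 k).1
    have hxyk : x k < y k := by
      rcases lt_trichotomy (x k) (y k) with h | h | h
      · exact h
      · exact absurd (hinj k hx hy h) hxy
      · exfalso
        have : IsMinAt S y k := by
          intro z hz hzy
          rcases eq_or_ne z x with rfl | hzx
          · exact h
          · exact lt_trans h (hxz z hz hzx hzy)
        have : k ∈ minSlots S y := mem_minSlots.2 this
        rw [hym] at this; simp at this
    have : IsMinAt S x k := by
      intro z hz hzx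
      rcases eq_or_ne z y with rfl | hzy
      · exact hxyk
      · exact hxz z hz hzx hzy
    have hk : k ∈ minSlots S x := mem_minSlots.2 this
    rw [hxs] at hk
    simp at hk
    subst hk; exact hv
  · -- a k + r < x k : impossible
    exfalso
    have hxz : ∀ z ∈ S, z ≠ x → z ≠ y → z k < x k :=
      fun z hz h1 h2 => lt_of_le_of_lt (hA z hz h1 h2 k).2 hv
    rcases lt_trichotomy (x k) (y k) with h | h | h
    · -- y above => y strict max at k => k = i, then contradiction with a third point
      have : IsMaxAt S y k := by
        intro z hz hzy
        rcases eq_or_ne z x with rfl | hzx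
        · exact h
        · exact lt_trans (hxz z hz hzx hzy) h
      have hk : k ∈ maxSlots S y := mem_maxSlots.2 this
      rw [hys] at hk; simp at hk; subst hk
      obtain ⟨z, hz, hzx, hzy⟩ := exists_third hn x y
      have h1 : z k ≤ a k + r := (hA z hz hzx hzy k).2
      have h2 : x k < z k := hxmin z hz hzx
      linarith
    · exact absurd (hinj k hx hy h) hxy
    · -- x strict max at k, but maxSlots x = ∅
      have : IsMaxAt S x k := by
        intro z hz hzx
        rcases eq_or_ne z y with rfl | hzy
        · exact h
        · exact hxz z hz hzx hzy
      have hk : k ∈ maxSlots S x := mem_maxSlots.2 this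
      rw [hxm] at hk; simp at hk

lemma excl_max {S : Finset (Fin d → ℝ)}
    (hinj : ∀ i : Fin d, Set.InjOn (fun x => x i) (S : Set (Fin d → ℝ)))
    (hn : 3 ≤ S.card)
    {x y : Fin d → ℝ} (hx : x ∈ S) (hy : y ∈ S) {i : Fin d}
    (hxtot : totSlots S x = 1) (hxmin : IsMinAt S x i)
    (hytot : totSlots S y = 1) (hymax : IsMaxAt S y i)
    {a : Fin d → ℝ} {r : ℝ}
    (hA : ∀ z ∈ S, z ≠ x → z ≠ y → ∀ k, a k ≤ z k ∧ z k ≤ a k + r)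
    {k : Fin d} (hviol : y k < a k ∨ a k + r < y k) : a i + r < y i := by
  obtain ⟨hxs, hxm⟩ := slots_of_tot_one_min hxtot hxmin
  obtain ⟨hys, hym⟩ := slots_of_tot_one_max hytot hymax
  have hxy : x ≠ y := by
    intro h
    rw [← h] at hymax
    have : i ∈ maxSlots S x := mem_maxSlots.2 hymax
    rw [hxm] at this; simp at this
  rcases hviol with hv | hv
  · -- y k < a k : impossible
    exfalso
    have hyz : ∀ z ∈ S, z ≠ x → z ≠ y → y k < z k :=
      fun z hz h1 h2 => lt_of_lt_of_le hv (hA z hz h1 h2 k).1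
    rcases lt_trichotomy (y k) (x k) with h | h | h
    · -- y strict min at k, but minSlots y = ∅
      have : IsMinAt S y k := by
        intro z hz hzy
        rcases eq_or_ne z x with rfl | hzx
        · exact h
        · exact hyz z hz hzx hzy
      have hk : k ∈ minSlots S y := mem_minSlots.2 this
      rw [hym] at hk; simp at hk
    · exact absurd (hinj k hy hx h) (Ne.symm hxy)
    · -- x strict min at k => k = i, contradiction via third point and y strict max at i
      have : IsMinAt S x k := by
        intro z hz hzx
        rcases eq_or_ne z y with rfl | hzy
        · exact h
        · exact lt_trans h (hyz z hz hzx hzy)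
      have hk : k ∈ minSlots S x := mem_minSlots.2 this
      rw [hxs] at hk; simp at hk; subst hk
      obtain ⟨z, hz, hzx, hzy⟩ := exists_third hn x y
      have h1 : a k ≤ z k := (hA z hz hzx hzy k).1
      have h2 : z k < y k := hymax z hz hzy
      linarith
  · -- a k + r < y k : y strict max at k, so k = i
    have hyz : ∀ z ∈ S, z ≠ x → z ≠ y → z k < y k :=
      fun z hz h1 h2 => lt_of_le_of_lt (hA z hz h1 h2 k).2 hv
    have hxyk : x k < y k := by
      rcases lt_trichotomy (x k) (y k) with h | h | h
      · exact h
      · exact absurd (hinj k hx hy h) hxy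
      · exfalso
        have : IsMaxAt S x k := by
          intro z hz hzx
          rcases eq_or_ne z y with rfl | hzy
          · exact h
          · exact lt_trans (hyz z hz hzx hzy) h
        have : k ∈ maxSlots S x := mem_maxSlots.2 this
        rw [hxm] at this; simp at this
    have : IsMaxAt S y k := by
      intro z hz hzy
      rcases eq_or_ne z x with rfl | hzx
      · exact hxyk
      · exact hyz z hz hzx hzy
    have hk : k ∈ maxSlots S y := mem_maxSlots.2 this
    rw [hys] at hk
    simp at hk
    subst hk; exact hv

end Core2

section Core3
variable {d : ℕ}

lemma width_lt {S : Finset (Fin d → ℝ)}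
    (hinj : ∀ i : Fin d, Set.InjOn (fun x => x i) (S : Set (Fin d → ℝ)))
    (hn : 3 ≤ S.card) (hS : Shatters (ClosedCubes d) S)
    {i j : Fin d} (hij : i ≠ j)
    {x y x' y' : Fin d → ℝ} (hx : x ∈ S) (hy : y ∈ S) (hx' : x' ∈ S) (hy' : y' ∈ S)
    (hxtot : totSlots S x = 1) (hxmin : IsMinAt S x i)
    (hytot : totSlots S y = 1) (hymax : IsMaxAt S y i)
    (hxtot' : totSlots S x' = 1) (hxmin' : IsMinAt S x' j)
    (hytot' : totSlots S y' = 1) (hymax' : IsMaxAt S y' j) :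
    y' j - x' j < y i - x i := by
  classical
  obtain ⟨hxs, hxm⟩ := slots_of_tot_one_min hxtot hxmin
  obtain ⟨hys, hym⟩ := slots_of_tot_one_max hytot hymax
  obtain ⟨hxs', hxm'⟩ := slots_of_tot_one_min hxtot' hxmin'
  obtain ⟨hys', hym'⟩ := slots_of_tot_one_max hytot' hymax'
  -- distinctness of the four points
  have hxy : x ≠ y := by
    intro h; rw [← h] at hymax
    have : i ∈ maxSlots S x := mem_maxSlots.2 hymax
    rw [hxm] at this; simp at this
  have hxx' : x ≠ x' := by
    intro h; rw [← h] at hxmin'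
    have : j ∈ minSlots S x := mem_minSlots.2 hxmin'
    rw [hxs] at this; simp at this; exact hij this.symm
  have hxy' : x ≠ y' := by
    intro h; rw [← h] at hymax'
    have : j ∈ maxSlots S x := mem_maxSlots.2 hymax'
    rw [hxm] at this; simp at this
  have hyx' : y ≠ x' := by
    intro h; rw [← h] at hxmin'
    have : j ∈ minSlots S y := mem_minSlots.2 hxmin'
    rw [hym] at this; simp at this
  have hyy' : y ≠ y' := by
    intro h; rw [← h] at hymax'
    have : j ∈ maxSlots S y := mem_maxSlots.2 hymax'
    rw [hys] at this; simp at this; exact hij this.symm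
  -- cube for S minus {x, y}
  obtain ⟨c, ⟨a, r, hr, rfl⟩, hc⟩ := hS ((S.erase x).erase y)
    (le_trans (Finset.erase_subset _ _) (Finset.erase_subset _ _))
  have hA : ∀ z ∈ S, z ≠ x → z ≠ y → ∀ k, a k ≤ z k ∧ z k ≤ a k + r := by
    intro z hz h1 h2 k
    have : z ∈ (↑((S.erase x).erase y) : Set (Fin d → ℝ)) := by simp [hz, h1, h2]
    rw [← hc] at this
    exact (cube_mem_iff a r z).1 this.2 k
  have hout : ∀ z ∈ S, z ∉ ((S.erase x).erase y) →
      ∃ k, z k < a k ∨ a k + r < z k := by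
    intro z hz hzA
    have hzc : z ∉ Set.univ.pi fun k => Set.Icc (a k) (a k + r) := by
      intro h
      have : z ∈ (↑((S.erase x).erase y) : Set (Fin d → ℝ)) := by rw [← hc]; exact ⟨hz, h⟩
      exact hzA (by exact_mod_cast this)
    rw [cube_mem_iff] at hzc
    push_neg at hzc
    obtain ⟨k, hk⟩ := hzc
    rcases lt_or_ge (z k) (a k) with h | h
    · exact ⟨k, Or.inl h⟩
    · exact ⟨k, Or.inr (hk h)⟩
  obtain ⟨k1, hk1⟩ := hout x hx (by simp [hxy])
  obtain ⟨k2, hk2⟩ := hout y hy (by simp)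
  have h1 : x i < a i := excl_min hinj hn hx hy hxtot hxmin hytot hymax hA hk1
  have h2 : a i + r < y i := excl_max hinj hn hx hy hxtot hxmin hytot hymax hA hk2
  have h3 : a j ≤ x' j := (hA x' hx' (Ne.symm hxx') (Ne.symm hyx') j).1
  have h4 : y' j ≤ a j + r := (hA y' hy' (Ne.symm hxy') (Ne.symm hyy') j).2
  linarith

lemma core_bound {d : ℕ} (hd : 1 ≤ d) (S : Finset (Fin d → ℝ))
    (hinj : ∀ i : Fin d, Set.InjOn (fun x => x i) (S : Set (Fin d → ℝ)))
    (hS : Shatters (ClosedCubes d) S) : 2 * S.card ≤ 3 * d + 1 := by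
  classical
  by_cases hsmall : S.card ≤ 2
  · omega
  push_neg at hsmall
  have hn : 3 ≤ S.card := hsmall
  -- the set of doubly-used coordinates
  set D : Finset (Fin d) := Finset.univ.filter (fun i =>
    (∃ x ∈ S, totSlots S x = 1 ∧ IsMinAt S x i) ∧
    (∃ y ∈ S, totSlots S y = 1 ∧ IsMaxAt S y i)) with hD
  have hDcard : D.card ≤ 1 := by
    refine Finset.card_le_one.2 fun i hi j hj => ?_
    rw [hD, Finset.mem_filter] at hi hj
    obtain ⟨-, ⟨x, hx, hxt, hxi⟩, ⟨y, hy, hyt, hyi⟩⟩ := hi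
    obtain ⟨-, ⟨x', hx', hxt', hxi'⟩, ⟨y', hy', hyt', hyi'⟩⟩ := hj
    by_contra hij
    have w1 := width_lt hinj hn hS hij hx hy hx' hy' hxt hxi hyt hyi hxt' hxi' hyt' hyi'
    have w2 := width_lt hinj hn hS (Ne.symm hij) hx' hy' hx hy hxt' hxi' hyt' hyi' hxt hxi hyt hyi
    linarith
  -- P1 : points with exactly one slot
  set P1 : Finset (Fin d → ℝ) := S.filter (fun x => totSlots S x = 1) with hP1
  -- every point has at least one slot
  have htot1 : ∀ x ∈ S, 1 ≤ totSlots S x := by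
    intro x hx
    obtain ⟨i, hi⟩ := exists_slot hS hx
    rcases hi with h | h
    · have : i ∈ minSlots S x := mem_minSlots.2 h
      have := Finset.card_pos.2 ⟨i, this⟩
      unfold totSlots; omega
    · have : i ∈ maxSlots S x := mem_maxSlots.2 h
      have := Finset.card_pos.2 ⟨i, this⟩
      unfold totSlots; omega
  -- |P1| ≤ d + 1
  have hP1card : P1.card ≤ d + 1 := by
    have hsub : P1 ⊆ Finset.univ.biUnion (fun i : Fin d =>
        P1.filter (fun x => IsMinAt S x i ∨ IsMaxAt S x i)) := by
      intro x hx
      have hxS : x ∈ S := (Finset.mem_filter.1 hx).1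
      obtain ⟨i, hi⟩ := exists_slot hS hxS
      exact Finset.mem_biUnion.2 ⟨i, Finset.mem_univ i, Finset.mem_filter.2 ⟨hx, hi⟩⟩
    have hfib : ∀ i : Fin d, (P1.filter (fun x => IsMinAt S x i ∨ IsMaxAt S x i)).card
        ≤ if i ∈ D then 2 else 1 := by
      intro i
      by_cases hiD : i ∈ D
      · simp only [hiD, if_true]
        -- at most one min-er and one max-er
        have : P1.filter (fun x => IsMinAt S x i ∨ IsMaxAt S x i) ⊆
            (S.filter (fun x => IsMinAt S x i)) ∪ (S.filter (fun x => IsMaxAt S x i)) := by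
          intro x hx
          rw [Finset.mem_filter] at hx
          have hxS : x ∈ S := (Finset.mem_filter.1 hx.1).1
          rcases hx.2 with h | h
          · exact Finset.mem_union_left _ (Finset.mem_filter.2 ⟨hxS, h⟩)
          · exact Finset.mem_union_right _ (Finset.mem_filter.2 ⟨hxS, h⟩)
        calc (P1.filter (fun x => IsMinAt S x i ∨ IsMaxAt S x i)).card
            ≤ _ := Finset.card_le_card this
          _ ≤ (S.filter (fun x => IsMinAt S x i)).card +
              (S.filter (fun x => IsMaxAt S x i)).card := Finset.card_union_le _ _
          _ ≤ 1 + 1 := by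
              gcongr
              · refine Finset.card_le_one.2 fun u hu v hv => ?_
                simp only [Finset.mem_filter] at hu hv
                exact minAt_unique hu.1 hv.1 hu.2 hv.2
              · refine Finset.card_le_one.2 fun u hu v hv => ?_
                simp only [Finset.mem_filter] at hu hv
                exact maxAt_unique hu.1 hv.1 hu.2 hv.2
          _ = 2 := rfl
      · simp only [hiD, if_false]
        refine Finset.card_le_one.2 fun u hu v hv => ?_
        by_contra huv
        simp only [Finset.mem_filter, hP1] at hu hv
        obtain ⟨⟨huS, hut⟩, hu2⟩ := hu
        obtain ⟨⟨hvS, hvt⟩, hv2⟩ := hv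
        -- no point is both a strict min and strict max at i (since |S| ≥ 2)
        have hnotboth : ∀ w ∈ S, ¬(IsMinAt S w i ∧ IsMaxAt S w i) := by
          rintro w hw ⟨h1, h2⟩
          obtain ⟨z, hz, hzw, -⟩ := exists_third hn w w
          exact absurd (h1 z hz hzw) (not_lt.2 (le_of_lt (h2 z hz hzw)))
        -- so u and v are a min-er and a max-er in some order, giving i ∈ D
        apply hiD
        rw [hD, Finset.mem_filter]
        refine ⟨Finset.mem_univ i, ?_⟩
        rcases hu2 with h1 | h1 <;> rcases hv2 with h2 | h2
        · exact absurd (minAt_unique huS hvS h1 h2) huv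
        · exact ⟨⟨u, huS, hut, h1⟩, ⟨v, hvS, hvt, h2⟩⟩
        · exact ⟨⟨v, hvS, hvt, h2⟩, ⟨u, huS, hut, h1⟩⟩
        · exact absurd (maxAt_unique huS hvS h1 h2) huv
    calc P1.card ≤ (Finset.univ.biUnion (fun i : Fin d =>
          P1.filter (fun x => IsMinAt S x i ∨ IsMaxAt S x i))).card := Finset.card_le_card hsub
      _ ≤ ∑ i : Fin d, (P1.filter (fun x => IsMinAt S x i ∨ IsMaxAt S x i)).card :=
          Finset.card_biUnion_le
      _ ≤ ∑ i : Fin d, (if i ∈ D then 2 else 1) := Finset.sum_le_sum fun i _ => hfib i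
      _ = ∑ i : Fin d, ((if i ∈ D then 1 else 0) + 1) := by
          refine Finset.sum_congr rfl fun i _ => ?_
          split_ifs <;> ring
      _ = D.card + d := by
          rw [Finset.sum_add_distrib, ← Finset.card_filter]
          congr 1
          · congr 1
            rw [Finset.filter_mem_eq_inter, Finset.univ_inter]
          · simp
      _ ≤ d + 1 := by omega
  -- final counting
  have hkey : 2 * S.card ≤ (∑ x ∈ S, totSlots S x) + P1.card := by
    have : ∀ x ∈ S, 2 ≤ totSlots S x + (if totSlots S x = 1 then 1 else 0) := by
      intro x hx
      have := htot1 x hx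
      split_ifs with h <;> omega
    calc 2 * S.card = ∑ _x ∈ S, 2 := by rw [Finset.sum_const]; ring
      _ ≤ ∑ x ∈ S, (totSlots S x + (if totSlots S x = 1 then 1 else 0)) :=
          Finset.sum_le_sum this
      _ = (∑ x ∈ S, totSlots S x) + ∑ x ∈ S, (if totSlots S x = 1 then 1 else 0) :=
          Finset.sum_add_distrib
      _ = (∑ x ∈ S, totSlots S x) + P1.card := by rw [hP1, Finset.card_filter]
  have := sum_totSlots_le S
  omega

end Core3

section Pert
variable {d : ℕ}

lemma exists_pos_uniform {α : Type*} (F : Finset α) (Q : α → ℝ → Prop)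
    (hmono : ∀ a, ∀ ε ε' : ℝ, 0 < ε' → ε' ≤ ε → Q a ε → Q a ε')
    (h : ∀ a ∈ F, ∃ ε > 0, Q a ε) : ∃ ε > 0, ∀ a ∈ F, Q a ε := by
  classical
  induction F using Finset.induction_on with
  | empty => exact ⟨1, one_pos, by simp⟩
  | insert _ _ hx ih =>
      rename_i a s
      obtain ⟨ε, hε, hQ⟩ := ih (fun b hb => h b (Finset.mem_insert_of_mem hb))
      obtain ⟨ε', hε', hQ'⟩ := h a (Finset.mem_insert_self a s)
      refine ⟨min ε ε', lt_min hε hε', ?_⟩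
      intro b hb
      rcases Finset.mem_insert.1 hb with rfl | hb
      · exact hmono b ε' _ (lt_min hε hε') (min_le_right _ _) hQ'
      · exact hmono b ε _ (lt_min hε hε') (min_le_left _ _) (hQ b hb)

/-- stability of shattering under small perturbations -/
lemma shatters_perturb (S : Finset (Fin d → ℝ)) (hS : Shatters (ClosedCubes d) S) :
    ∃ δ : ℝ, 0 < δ ∧ ∀ g : (Fin d → ℝ) → (Fin d → ℝ),
      (∀ x ∈ S, ∀ i, |g x i - x i| ≤ δ) →
      Shatters (ClosedCubes d) (S.image g) := by
  classical
  -- a uniform margin over all subsets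
  have key : ∃ ε > 0, ∀ B ∈ S.powerset, ∃ (a : Fin d → ℝ) (r : ℝ), 0 ≤ r ∧
      (∀ z ∈ B, ∀ i, a i ≤ z i ∧ z i ≤ a i + r) ∧
      (∀ z ∈ S, z ∉ B → ∃ i, z i + ε ≤ a i ∨ a i + r + ε ≤ z i) := by
    apply exists_pos_uniform
    · rintro B ε ε' hε' hle ⟨a, r, hr, h1, h2⟩
      refine ⟨a, r, hr, h1, fun z hz hzB => ?_⟩
      obtain ⟨i, hi⟩ := h2 z hz hzB
      exact ⟨i, hi.imp (fun h => by linarith) (fun h => by linarith)⟩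
    · intro B hB
      rw [Finset.mem_powerset] at hB
      obtain ⟨c, ⟨a, r, hr, rfl⟩, hc⟩ := hS B hB
      have key2 : ∃ ε > 0, ∀ z ∈ S \ B, ∃ i, z i + ε ≤ a i ∨ a i + r + ε ≤ z i := by
        apply exists_pos_uniform
        · rintro z ε ε' hε' hle ⟨i, hi⟩
          exact ⟨i, hi.imp (fun h => by linarith) (fun h => by linarith)⟩
        · intro z hz
          rw [Finset.mem_sdiff] at hz
          have hzc : z ∉ Set.univ.pi fun i => Set.Icc (a i) (a i + r) := by
            intro h
            have : z ∈ (↑B : Set (Fin d → ℝ)) := by rw [← hc]; exact ⟨hz.1, h⟩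
            exact hz.2 (by exact_mod_cast this)
          rw [cube_mem_iff] at hzc
          push_neg at hzc
          obtain ⟨i, hi⟩ := hzc
          rcases lt_or_ge (z i) (a i) with h | h
          · exact ⟨a i - z i, by linarith, i, Or.inl (by linarith)⟩
          · have := hi h
            exact ⟨z i - (a i + r), by linarith, i, Or.inr (by linarith)⟩
      obtain ⟨ε, hε, hεz⟩ := key2
      refine ⟨ε, hε, a, r, hr, fun z hz i => ?_, fun z hz hzB => hεz z (Finset.mem_sdiff.2 ⟨hz, hzB⟩)⟩
      · have h3 : z ∈ (↑S : Set (Fin d → ℝ)) ∩ (Set.univ.pi fun i => Set.Icc (a i) (a i + r)) := by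
          rw [hc]; exact_mod_cast hz
        exact (cube_mem_iff a r z).1 h3.2 i
  obtain ⟨ε, hε, hkey⟩ := key
  refine ⟨ε / 4, by linarith, fun g hg A' hA' => ?_⟩
  set B : Finset (Fin d → ℝ) := S.filter (fun x => g x ∈ A') with hBdef
  have hBP : B ∈ S.powerset := Finset.mem_powerset.2 (Finset.filter_subset _ _)
  obtain ⟨a, r, hr, hin, hout⟩ := hkey B hBP
  refine ⟨Set.univ.pi fun i => Set.Icc (a i - ε/4) (a i - ε/4 + (r + ε/2)),
    ⟨fun i => a i - ε/4, r + ε/2, by linarith, rfl⟩, ?_⟩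
  have himage : ∀ u, u ∈ A' ↔ ∃ x ∈ B, g x = u := by
    intro u
    constructor
    · intro hu
      have huS : u ∈ S.image g := hA' hu
      obtain ⟨x, hx, rfl⟩ := Finset.mem_image.1 huS
      exact ⟨x, Finset.mem_filter.2 ⟨hx, hu⟩, rfl⟩
    · rintro ⟨x, hx, rfl⟩
      exact (Finset.mem_filter.1 hx).2
  ext u
  simp only [Set.mem_inter_iff, Finset.coe_image, Set.mem_image, Finset.mem_coe]
  constructor
  · rintro ⟨⟨x, hxS, rfl⟩, hu⟩
    rw [himage]
    refine ⟨x, ?_, rfl⟩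
    by_contra hxB
    obtain ⟨i, hi⟩ := hout x hxS (by simpa [hBdef] using hxB)
    have h1 := (cube_mem_iff _ _ _).1 hu i
    have h2 := abs_le.1 (hg x hxS i)
    rcases hi with h | h
    · have : g x i < a i - ε/4 := by linarith
      linarith [h1.1]
    · have : a i - ε/4 + (r + ε/2) < g x i := by linarith
      linarith [h1.2]
  · intro hu
    obtain ⟨x, hxB, rfl⟩ := (himage u).1 hu
    have hxS : x ∈ S := (Finset.mem_filter.1 hxB).1
    refine ⟨⟨x, hxS, rfl⟩, ?_⟩
    rw [cube_mem_iff]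
    intro i
    have h1 := hin x hxB i
    have h2 := abs_le.1 (hg x hxS i)
    constructor <;> [linarith [h1.1]; linarith [h1.2]]

end Pert

section Upper
variable {d : ℕ}

lemma upper_bound (hd : 1 ≤ d) (S : Finset (Fin d → ℝ))
    (hS : Shatters (ClosedCubes d) S) : S.card ≤ (3 * d + 1) / 2 := by
  classical
  obtain ⟨δ, hδ, hpert⟩ := shatters_perturb S hS
  -- index of points of S
  set ι : (Fin d → ℝ) → ℕ := fun x => if h : x ∈ S then (S.equivFin ⟨x, h⟩ : ℕ) else 0 with hι
  have hιlt : ∀ x ∈ S, ι x < S.card := by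
    intro x hx
    simp only [hι, dif_pos hx]
    exact (S.equivFin ⟨x, hx⟩).2
  have hιinj : ∀ x ∈ S, ∀ y ∈ S, ι x = ι y → x = y := by
    intro x hx y hy h
    simp only [hι, dif_pos hx, dif_pos hy] at h
    have h2 := S.equivFin.injective (Fin.val_injective h)
    exact congrArg Subtype.val h2
  -- bad slopes
  set Bad : Finset ℝ := (S ×ˢ S ×ˢ (Finset.univ : Finset (Fin d))).image
    (fun p => (p.1 p.2.2 - p.2.1 p.2.2) / ((ι p.2.1 : ℝ) - ι p.1)) with hBad
  have hδ' : 0 < δ / (S.card + 1) := by positivity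
  obtain ⟨t, ht, htBad⟩ := (Set.Ioo_infinite hδ').exists_notMem_finset Bad
  obtain ⟨ht0, htδ⟩ := ht
  set g : (Fin d → ℝ) → (Fin d → ℝ) := fun x => fun i => x i + (ι x : ℝ) * t with hg
  have hclose : ∀ x ∈ S, ∀ i, |g x i - x i| ≤ δ := by
    intro x hx i
    simp only [hg, add_sub_cancel_left]
    rw [abs_of_nonneg (by positivity)]
    have h1 : (ι x : ℝ) ≤ S.card := by exact_mod_cast (hιlt x hx).le
    calc (ι x : ℝ) * t ≤ (S.card : ℝ) * t := by nlinarith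
      _ ≤ (S.card : ℝ) * (δ / (S.card + 1)) := by nlinarith
      _ ≤ (S.card + 1) * (δ / (S.card + 1)) := by nlinarith [hδ.le, hδ'.le]
      _ = δ := by field_simp
  have hcoord : ∀ x ∈ S, ∀ y ∈ S, ∀ i : Fin d, g x i = g y i → x = y := by
    intro x hx y hy i h
    simp only [hg] at h
    by_cases hxy : ι x = ι y
    · exact hιinj x hx y hy hxy
    · exfalso
      have hne : (ι y : ℝ) - (ι x : ℝ) ≠ 0 := by
        intro hc
        exact hxy (Nat.cast_injective (by linarith [hc] : (ι x : ℝ) = ι y))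
      have : t = (x i - y i) / ((ι y : ℝ) - ι x) := by
        field_simp
        linarith
      apply htBad
      rw [hBad]
      exact Finset.mem_image.2 ⟨(x, y, i), by simp [hx, hy], this.symm⟩
  have hinj : Set.InjOn g (S : Set (Fin d → ℝ)) := by
    intro x hx y hy h
    exact hcoord x hx y hy ⟨0, hd⟩ (congrFun h ⟨0, hd⟩)
  have hcard : (S.image g).card = S.card := Finset.card_image_of_injOn hinj
  have hinj' : ∀ i : Fin d, Set.InjOn (fun x => x i) ((S.image g : Finset (Fin d → ℝ)) : Set (Fin d → ℝ)) := by
    intro i u hu v hv h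
    simp only [Finset.coe_image, Set.mem_image, Finset.mem_coe] at hu hv
    obtain ⟨x, hx, rfl⟩ := hu
    obtain ⟨y, hy, rfl⟩ := hv
    exact congrArg g (hcoord x hx y hy i h)
  have hbound := core_bound hd (S.image g) hinj' (hpert g hclose)
  omega

end Upper

section Lower

noncomputable def xval : ℕ → ℝ := fun ρ => if ρ = 0 then 1 else if ρ = 1 then -1 else -2
noncomputable def yval : ℕ → ℝ := fun ρ => if ρ = 0 then 1 else if ρ = 1 then 2 else -1

noncomputable def pointFn (d : ℕ) : ℕ → ℕ → ℝ := fun t i =>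
  if t < 3 * (d / 2) then
    (if i = 2 * (t / 3) then xval (t % 3)
     else if i = 2 * (t / 3) + 1 then yval (t % 3) else 0)
  else (if i = 2 * (d / 2) then (if t = 3 * (d / 2) then -100 else 100) else 0)

noncomputable def rB (β : ℕ → Bool) (d : ℕ) : ℝ :=
  if β (3 * (d / 2)) ∧ β (3 * (d / 2) + 1) then 300 else 150

noncomputable def xleft (r : ℝ) (b0 b1 b2 : Bool) : ℝ :=
  if b0 then (if b1 ∨ b2 then -3 else -(1/2)) else (if b1 ∨ b2 then 1/2 - r else -(1/2))

noncomputable def yleft (r : ℝ) (b0 b1 b2 : Bool) : ℝ :=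
  if b2 then (if b1 then -3 else 3/2 - r)
  else (if b1 then -(1/2) else (if b0 then 3/2 - r else 1/2 - r))

noncomputable def oddleft (r : ℝ) (bA bB : Bool) : ℝ :=
  if bA then (if bB then -150 else -140) else (if bB then -10 else -75)

noncomputable def aleft (β : ℕ → Bool) (d : ℕ) (i : ℕ) : ℝ :=
  if i < 2 * (d / 2) then
    (if i % 2 = 0 then xleft (rB β d) (β (3 * (i / 2))) (β (3 * (i / 2) + 1)) (β (3 * (i / 2) + 2))
     else yleft (rB β d) (β (3 * (i / 2))) (β (3 * (i / 2) + 1)) (β (3 * (i / 2) + 2)))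
  else oddleft (rB β d) (β (3 * (d / 2))) (β (3 * (d / 2) + 1))

lemma rB_150 (β : ℕ → Bool) (d : ℕ) : 150 ≤ rB β d := by
  unfold rB; split_ifs <;> norm_num

lemma rB_300 (β : ℕ → Bool) (d : ℕ) : rB β d ≤ 300 := by
  unfold rB; split_ifs <;> norm_num

lemma aleft_even (β : ℕ → Bool) (d g : ℕ) (h : g < d / 2) :
    aleft β d (2 * g) = xleft (rB β d) (β (3 * g)) (β (3 * g + 1)) (β (3 * g + 2)) := by
  unfold aleft
  rw [if_pos (by omega), if_pos (by omega)]
  congr 2 <;> omega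

lemma aleft_odd (β : ℕ → Bool) (d g : ℕ) (h : g < d / 2) :
    aleft β d (2 * g + 1) = yleft (rB β d) (β (3 * g)) (β (3 * g + 1)) (β (3 * g + 2)) := by
  unfold aleft
  rw [if_pos (by omega), if_neg (by omega)]
  congr 2 <;> omega

lemma aleft_last (β : ℕ → Bool) (d : ℕ) :
    aleft β d (2 * (d / 2)) = oddleft (rB β d) (β (3 * (d / 2))) (β (3 * (d / 2) + 1)) := by
  unfold aleft
  rw [if_neg (by omega)]

lemma zero_mem (β : ℕ → Bool) (d : ℕ) (i : ℕ) :
    aleft β d i ≤ 0 ∧ 0 ≤ aleft β d i + rB β d := by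
  have h1 := rB_150 β d
  have h2 := rB_300 β d
  unfold aleft xleft yleft oddleft rB at *
  split_ifs <;> constructor <;> simp_all <;> linarith

end Lower

section Lower2

lemma pf_own_x (d t : ℕ) (h : t < 3 * (d / 2)) :
    pointFn d t (2 * (t / 3)) = xval (t % 3) := by
  unfold pointFn; rw [if_pos h, if_pos rfl]

lemma pf_own_y (d t : ℕ) (h : t < 3 * (d / 2)) :
    pointFn d t (2 * (t / 3) + 1) = yval (t % 3) := by
  unfold pointFn; rw [if_pos h, if_neg (by omega), if_pos rfl]

lemma pf_foreign (d t i : ℕ) (h : t < 3 * (d / 2)) (h1 : i ≠ 2 * (t / 3))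
    (h2 : i ≠ 2 * (t / 3) + 1) : pointFn d t i = 0 := by
  unfold pointFn; rw [if_pos h, if_neg h1, if_neg h2]

lemma pf_odd_foreign (d t i : ℕ) (h : ¬ t < 3 * (d / 2)) (hi : i ≠ 2 * (d / 2)) :
    pointFn d t i = 0 := by
  unfold pointFn; rw [if_neg h, if_neg hi]

lemma pf_odd_own (d t : ℕ) (h : ¬ t < 3 * (d / 2)) :
    pointFn d t (2 * (d / 2)) = if t = 3 * (d / 2) then -100 else 100 := by
  unfold pointFn; rw [if_neg h, if_pos rfl]

lemma xval_ne_zero (ρ : ℕ) : xval ρ ≠ 0 := by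
  unfold xval; split_ifs <;> norm_num

lemma pt_inj (d : ℕ) (hd : 1 ≤ d) (t t' : ℕ) (ht : t < (3 * d + 1) / 2)
    (ht' : t' < (3 * d + 1) / 2) (hne : t ≠ t') :
    ∃ i < d, pointFn d t i ≠ pointFn d t' i := by
  by_cases h1 : t < 3 * (d / 2) <;> by_cases h2 : t' < 3 * (d / 2)
  · -- both gadget points
    by_cases hg : t / 3 = t' / 3
    · -- same gadget, different roles: x values differ
      refine ⟨2 * (t / 3), by omega, ?_⟩
      rw [pf_own_x d t h1, hg, pf_own_x d t' h2]
      have hrr : t % 3 ≠ t' % 3 := by omega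
      have e1 : t % 3 = 0 ∨ t % 3 = 1 ∨ t % 3 = 2 := by omega
      have e2 : t' % 3 = 0 ∨ t' % 3 = 1 ∨ t' % 3 = 2 := by omega
      unfold xval
      rcases e1 with e | e | e <;> rcases e2 with e' | e' | e' <;>
        simp [e, e'] at hrr ⊢ <;> norm_num
    · -- different gadgets
      refine ⟨2 * (t / 3), by omega, ?_⟩
      rw [pf_own_x d t h1, pf_foreign d t' _ h2 (by omega) (by omega)]
      exact xval_ne_zero _
  · refine ⟨2 * (t / 3), by omega, ?_⟩
    rw [pf_own_x d t h1, pf_odd_foreign d t' _ h2 (by omega)]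
    exact xval_ne_zero _
  · refine ⟨2 * (t' / 3), by omega, ?_⟩
    rw [pf_own_x d t' h2, pf_odd_foreign d t _ h1 (by omega)]
    exact (xval_ne_zero _).symm
  · -- both odd points: t,t' ∈ {3m, 3m+1}, d odd so 2*(d/2) < d
    have hdo : d % 2 = 1 := by omega
    refine ⟨2 * (d / 2), by omega, ?_⟩
    rw [pf_odd_own d t h1, pf_odd_own d t' h2]
    have : t = 3 * (d / 2) ∨ t' = 3 * (d / 2) := by omega
    rcases this with e | e <;> [rw [if_pos e, if_neg (by omega)]; rw [if_neg (by omega), if_pos e]] <;> norm_num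

end Lower2

section Lower3

set_option maxHeartbeats 1600000 in
lemma mem_iff (d : ℕ) (β : ℕ → Bool) (t : ℕ) (ht : t < (3 * d + 1) / 2) :
    (∀ i < d, aleft β d i ≤ pointFn d t i ∧ pointFn d t i ≤ aleft β d i + rB β d)
      ↔ β t = true := by
  have h150 := rB_150 β d
  have h300 := rB_300 β d
  by_cases hg : t < 3 * (d / 2)
  · -- gadget point
    have hg2 : t / 3 < d / 2 := by omega
    have e : t % 3 = 0 ∨ t % 3 = 1 ∨ t % 3 = 2 := by omega
    constructor
    · intro h
      by_contra hβ
      rw [Bool.not_eq_true] at hβ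
      rcases e with e | e | e
      · have hb0 : β (3 * (t / 3)) = false := by rw [← hβ]; congr 1; omega
        cases hb1 : β (3 * (t / 3) + 1) <;> cases hb2 : β (3 * (t / 3) + 2)
        · -- all relevant false: violation at y coordinate
          have h1 := (h (2 * (t / 3) + 1) (by omega)).2
          rw [pf_own_y d t hg, aleft_odd β d _ hg2] at h1
          unfold yval yleft at h1
          rw [e] at h1
          simp [hb0, hb1, hb2] at h1
          linarith
        · have h1 := (h (2 * (t / 3)) (by omega)).2
          rw [pf_own_x d t hg, aleft_even β d _ hg2] at h1
          unfold xval xleft at h1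
          rw [e] at h1
          simp [hb0, hb1, hb2] at h1
          linarith
        · have h1 := (h (2 * (t / 3)) (by omega)).2
          rw [pf_own_x d t hg, aleft_even β d _ hg2] at h1
          unfold xval xleft at h1
          rw [e] at h1
          simp [hb0, hb1, hb2] at h1
          linarith
        · have h1 := (h (2 * (t / 3)) (by omega)).2
          rw [pf_own_x d t hg, aleft_even β d _ hg2] at h1
          unfold xval xleft at h1
          rw [e] at h1
          simp [hb0, hb1, hb2] at h1
          linarith
      · have hb1 : β (3 * (t / 3) + 1) = false := by rw [← hβ]; congr 1; omega
        cases hb0 : β (3 * (t / 3)) <;> cases hb2 : β (3 * (t / 3) + 2)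
        · -- all false: violation at x coordinate (lower)
          have h1 := (h (2 * (t / 3)) (by omega)).1
          rw [pf_own_x d t hg, aleft_even β d _ hg2] at h1
          unfold xval xleft at h1
          rw [e] at h1
          simp [hb0, hb1, hb2] at h1
          linarith
        · have h1 := (h (2 * (t / 3) + 1) (by omega)).2
          rw [pf_own_y d t hg, aleft_odd β d _ hg2] at h1
          unfold yval yleft at h1
          rw [e] at h1
          simp [hb0, hb1, hb2] at h1
          linarith
        · have h1 := (h (2 * (t / 3) + 1) (by omega)).2
          rw [pf_own_y d t hg, aleft_odd β d _ hg2] at h1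
          unfold yval yleft at h1
          rw [e] at h1
          simp [hb0, hb1, hb2] at h1
          linarith
        · have h1 := (h (2 * (t / 3) + 1) (by omega)).2
          rw [pf_own_y d t hg, aleft_odd β d _ hg2] at h1
          unfold yval yleft at h1
          rw [e] at h1
          simp [hb0, hb1, hb2] at h1
          linarith
      · have hb2 : β (3 * (t / 3) + 2) = false := by rw [← hβ]; congr 1; omega
        cases hb1 : β (3 * (t / 3) + 1)
        · have h1 := (h (2 * (t / 3)) (by omega)).1
          rw [pf_own_x d t hg, aleft_even β d _ hg2] at h1
          unfold xval xleft at h1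
          rw [e] at h1
          cases hb0 : β (3 * (t / 3)) <;> simp [hb0, hb1, hb2] at h1 <;> linarith
        · have h1 := (h (2 * (t / 3) + 1) (by omega)).1
          rw [pf_own_y d t hg, aleft_odd β d _ hg2] at h1
          unfold yval yleft at h1
          rw [e] at h1
          simp [hb1, hb2] at h1
          linarith
    · intro hβ i hi
      by_cases hi1 : i = 2 * (t / 3)
      · subst hi1
        rw [pf_own_x d t hg, aleft_even β d _ hg2]
        rcases e with e | e | e
        · have hb0 : β (3 * (t / 3)) = true := by rw [← hβ]; congr 1; omega
          cases hb1 : β (3 * (t / 3) + 1) <;> cases hb2 : β (3 * (t / 3) + 2) <;>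
            simp [xval, xleft, e, hb0, hb1, hb2] <;> (try constructor) <;> linarith
        · have hb1 : β (3 * (t / 3) + 1) = true := by rw [← hβ]; congr 1; omega
          cases hb0 : β (3 * (t / 3)) <;> cases hb2 : β (3 * (t / 3) + 2) <;>
            simp [xval, xleft, e, hb0, hb1, hb2] <;> (try constructor) <;> linarith
        · have hb2 : β (3 * (t / 3) + 2) = true := by rw [← hβ]; congr 1; omega
          cases hb0 : β (3 * (t / 3)) <;> cases hb1 : β (3 * (t / 3) + 1) <;>
            simp [xval, xleft, e, hb0, hb1, hb2] <;> (try constructor) <;> linarith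
      · by_cases hi2 : i = 2 * (t / 3) + 1
        · subst hi2
          rw [pf_own_y d t hg, aleft_odd β d _ hg2]
          rcases e with e | e | e
          · have hb0 : β (3 * (t / 3)) = true := by rw [← hβ]; congr 1; omega
            cases hb1 : β (3 * (t / 3) + 1) <;> cases hb2 : β (3 * (t / 3) + 2) <;>
              simp [yval, yleft, e, hb0, hb1, hb2] <;> (try constructor) <;> linarith
          · have hb1 : β (3 * (t / 3) + 1) = true := by rw [← hβ]; congr 1; omega
            cases hb0 : β (3 * (t / 3)) <;> cases hb2 : β (3 * (t / 3) + 2) <;>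
              simp [yval, yleft, e, hb0, hb1, hb2] <;> (try constructor) <;> linarith
          · have hb2 : β (3 * (t / 3) + 2) = true := by rw [← hβ]; congr 1; omega
            cases hb0 : β (3 * (t / 3)) <;> cases hb1 : β (3 * (t / 3) + 1) <;>
              simp [yval, yleft, e, hb0, hb1, hb2] <;> (try constructor) <;> linarith
        · rw [pf_foreign d t i hg hi1 hi2]
          exact zero_mem β d i
  · -- odd point
    have hdo : d % 2 = 1 := by omega
    have hte : t = 3 * (d / 2) ∨ t = 3 * (d / 2) + 1 := by omega
    constructor
    · intro h
      by_contra hβ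
      rw [Bool.not_eq_true] at hβ
      have h1 := h (2 * (d / 2)) (by omega)
      rw [pf_odd_own d t hg, aleft_last β d] at h1
      rcases hte with e | e
      · have hbA : β (3 * (d / 2)) = false := by rw [← hβ]; congr 1; omega
        rw [if_pos e] at h1
        unfold oddleft at h1
        cases hbB : β (3 * (d / 2) + 1) <;> simp [hbA, hbB] at h1 <;> linarith [h1.1]
      · have hbB : β (3 * (d / 2) + 1) = false := by rw [← hβ]; congr 1; omega
        have hr : rB β d = 150 := by unfold rB; rw [if_neg]; simp [hbB]
        rw [if_neg (by omega)] at h1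
        unfold oddleft at h1
        rw [hr] at h1
        cases hbA : β (3 * (d / 2)) <;> simp [hbA, hbB] at h1 <;> linarith [h1.2]
    · intro hβ i hi
      by_cases hi1 : i = 2 * (d / 2)
      · subst hi1
        rw [pf_odd_own d t hg, aleft_last β d]
        unfold oddleft
        rcases hte with e | e
        · have hbA : β (3 * (d / 2)) = true := by rw [← hβ]; congr 1; omega
          rw [if_pos e]
          simp only [hbA, if_true]
          cases hbB : β (3 * (d / 2) + 1)
          · have hr : rB β d = 150 := by unfold rB; rw [if_neg]; simp [hbB]
            rw [hr]; norm_num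
          · have hr : rB β d = 300 := by unfold rB; rw [if_pos ⟨hbA, hbB⟩]
            rw [hr]; norm_num
        · have hbB : β (3 * (d / 2) + 1) = true := by rw [← hβ]; congr 1; omega
          rw [if_neg (show ¬ t = 3 * (d / 2) by omega)]
          simp only [hbB, if_true]
          cases hbA : β (3 * (d / 2))
          · have hr : rB β d = 150 := by unfold rB; rw [if_neg]; simp [hbA]
            rw [hr]; simp [hbA]; norm_num
          · have hr : rB β d = 300 := by unfold rB; rw [if_pos ⟨hbA, hbB⟩]
            rw [hr]; simp [hbA]; norm_num
      · rw [pf_odd_foreign d t i hg hi1]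
        exact zero_mem β d i

end Lower3

section Lower4

lemma exists_shattered (d : ℕ) (hd : 1 ≤ d) :
    ∃ S : Finset (Fin d → ℝ), S.card = (3 * d + 1) / 2 ∧ Shatters (ClosedCubes d) S := by
  classical
  set n := (3 * d + 1) / 2 with hn
  set pt : Fin n → (Fin d → ℝ) := (fun t i => pointFn d t i) with hpt
  have hinj : Function.Injective pt := by
    intro t t' h
    by_contra hne
    obtain ⟨i, hi, hne2⟩ := pt_inj d hd t t' t.2 t'.2 (fun hc => hne (Fin.ext hc))
    exact hne2 (congrFun h ⟨i, hi⟩)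
  refine ⟨Finset.univ.image pt, ?_, ?_⟩
  · rw [Finset.card_image_of_injective _ hinj, Finset.card_univ, Fintype.card_fin]
  · intro A hA
    set β : ℕ → Bool := fun k => decide (∃ h : k < n, pt ⟨k, h⟩ ∈ A) with hβ
    refine ⟨Set.univ.pi fun i : Fin d => Set.Icc (aleft β d (i : ℕ)) (aleft β d (i : ℕ) + rB β d),
      ⟨fun i => aleft β d (i : ℕ), rB β d, by linarith [rB_150 β d], rfl⟩, ?_⟩
    ext u
    constructor
    · rintro ⟨huS, hu⟩
      obtain ⟨t, -, rfl⟩ := Finset.mem_image.1 huS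
      have hall : ∀ i < d, aleft β d i ≤ pointFn d (t : ℕ) i ∧
          pointFn d (t : ℕ) i ≤ aleft β d i + rB β d := by
        intro i hi
        exact (cube_mem_iff _ _ _).1 hu ⟨i, hi⟩
      have hb := (mem_iff d β t t.2).1 hall
      have hmem := of_decide_eq_true hb
      obtain ⟨h', hmem⟩ := hmem
      exact hmem
    · intro hu
      have huA : u ∈ A := hu
      have huS : u ∈ Finset.univ.image pt := hA huA
      obtain ⟨t, -, rfl⟩ := Finset.mem_image.1 huS
      refine ⟨huS, ?_⟩
      have hb : β (t : ℕ) = true := decide_eq_true ⟨t.2, huA⟩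
      have hall := (mem_iff d β t t.2).2 hb
      rw [cube_mem_iff]
      intro i
      exact hall i i.2

end Lower4

/-- For every `d ≥ 1` there is a set of cardinality `⌊(3d+1)/2⌋` in `ℝ^d` shattered by
closed cubes; together with the upper bound, the VC dimension of the ℓ^∞ balls in `ℝ^d`
equals `⌊(3d+1)/2⌋`. -/
theorem vc_dim_cubes_eq (d : ℕ) (hd : 1 ≤ d) :
    (∃ S : Finset (Fin d → ℝ), S.card = (3 * d + 1) / 2 ∧ Shatters (ClosedCubes d) S) ∧
    (∀ S : Finset (Fin d → ℝ), Shatters (ClosedCubes d) S → S.card ≤ (3 * d + 1) / 2) := by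
  exact ⟨exists_shattered d hd, fun S hS => upper_bound hd S hS⟩
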